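/- Let k, k′ ≥ 1 be integers and ε > 0. For any vectors x, y ∈ ℝ^k with nonnegative entries, any x′, y′ ∈ ℝ^{k′} with nonnegative entries, and any r, r′ ∈ ℝ, if (xᵀ1_k)² + ‖x‖² = (x′ᵀ1_{k′})² + ‖x′‖² = ε² and xᵀ1_k + x′ᵀ1_{k′} = r + r′ + ε√2, then ‖x + y + r·1_k‖² + ‖x′ + y′ + r′·1_{k′}‖² ≥ ε². -/

import Mathlib

noncomputable section

set_option maxHeartbeats 1000000

/-- Technical vector lemma: for nonnegative `x, y ∈ ℝ^k`, `x′, y′ ∈ ℝ^{k′}` and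
`r, r′ ∈ ℝ`, if `(xᵀ1)² + ‖x‖² = (x′ᵀ1)² + ‖x′‖² = ε²` and
`xᵀ1 + x′ᵀ1 = r + r′ + ε√2`, then
`‖x + y + r·1‖² + ‖x′ + y′ + r′·1‖² ≥ ε²`. -/
theorem vector_sum_lemma (k k' : ℕ) (hk : 1 ≤ k) (hk' : 1 ≤ k') (ε : ℝ) (hε : 0 < ε)
    (x y : Fin k → ℝ) (x' y' : Fin k' → ℝ) (r r' : ℝ)
    (hx : ∀ i, 0 ≤ x i) (hy : ∀ i, 0 ≤ y i)
    (hx' : ∀ i, 0 ≤ x' i) (hy' : ∀ i, 0 ≤ y' i)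
    (h1 : (∑ i, x i)^2 + ∑ i, (x i)^2 = ε^2)
    (h2 : (∑ i, x' i)^2 + ∑ i, (x' i)^2 = ε^2)
    (h3 : (∑ i, x i) + (∑ i, x' i) = r + r' + ε * Real.sqrt 2) :
    ε^2 ≤ (∑ i, (x i + y i + r)^2) + ∑ i, (x' i + y' i + r')^2 := by
  set m : ℝ := Real.sqrt 2 with hmdef
  have hm2 : m ^ 2 = 2 := Real.sq_sqrt (by norm_num)
  have hm0 : 0 < m := Real.sqrt_pos.mpr (by norm_num)
  have hmle : m ≤ 2 :=
    le_of_pow_le_pow_left₀ two_ne_zero (by norm_num) (by rw [hm2]; norm_num)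
  set s := ∑ i, x i with hsdef
  set s' := ∑ i, x' i with hs'def
  set n := ∑ i, (x i)^2 with hndef
  set n' := ∑ i, (x' i)^2 with hn'def
  set A := ∑ i, (x i + y i + r)^2 with hAdef
  set A' := ∑ i, (x' i + y' i + r')^2 with hA'def
  have hε2 : 0 < ε ^ 2 := pow_pos hε 2
  -- basic nonnegativity
  have hs0 : 0 ≤ s := Finset.sum_nonneg fun i _ => hx i
  have hs'0 : 0 ≤ s' := Finset.sum_nonneg fun i _ => hx' i
  have hn0 : 0 ≤ n := Finset.sum_nonneg fun i _ => sq_nonneg _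
  have hn'0 : 0 ≤ n' := Finset.sum_nonneg fun i _ => sq_nonneg _
  -- n ≤ s² and n' ≤ s'²
  have hns : n ≤ s ^ 2 := by
    have h : s ^ 2 = ∑ i, x i * s := by rw [← Finset.sum_mul]; ring
    rw [h]
    refine Finset.sum_le_sum fun i _ => ?_
    rw [sq]
    exact mul_le_mul_of_nonneg_left
      (Finset.single_le_sum (fun j _ => hx j) (Finset.mem_univ i)) (hx i)
  have hns' : n' ≤ s' ^ 2 := by
    have h : s' ^ 2 = ∑ i, x' i * s' := by rw [← Finset.sum_mul]; ring
    rw [h]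
    refine Finset.sum_le_sum fun i _ => ?_
    rw [sq]
    exact mul_le_mul_of_nonneg_left
      (Finset.single_le_sum (fun j _ => hx' j) (Finset.mem_univ i)) (hx' i)
  have hs_pos : 0 < s := by
    by_contra h
    push_neg at h
    have hz : s = 0 := le_antisymm h hs0
    have : s ^ 2 = 0 := by rw [hz]; ring
    linarith
  have hs'_pos : 0 < s' := by
    by_contra h
    push_neg at h
    have hz : s' = 0 := le_antisymm h hs'0
    have : s' ^ 2 = 0 := by rw [hz]; ring
    linarith
  have hn_pos : 0 < n := by
    rcases hn0.lt_or_eq with h | h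
    · exact h
    · exfalso
      have hall := (Finset.sum_eq_zero_iff_of_nonneg fun i _ => sq_nonneg (x i)).mp h.symm
      have hsz : s = 0 := Finset.sum_eq_zero fun i _ =>
        (pow_eq_zero_iff two_ne_zero).mp (hall i (Finset.mem_univ i))
      exact absurd hsz hs_pos.ne'
  have hn'_pos : 0 < n' := by
    rcases hn'0.lt_or_eq with h | h
    · exact h
    · exfalso
      have hall := (Finset.sum_eq_zero_iff_of_nonneg fun i _ => sq_nonneg (x' i)).mp h.symm
      have hsz : s' = 0 := Finset.sum_eq_zero fun i _ =>
        (pow_eq_zero_iff two_ne_zero).mp (hall i (Finset.mem_univ i))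
      exact absurd hsz hs'_pos.ne'
  have hn_eq : n = ε ^ 2 - s ^ 2 := by linarith
  have hn'_eq : n' = ε ^ 2 - s' ^ 2 := by linarith
  have hrr : r + r' = s + s' - ε * m := by linarith
  have hsε : s ≤ ε :=
    le_of_pow_le_pow_left₀ two_ne_zero hε.le (by linarith)
  have hs'ε : s' ≤ ε :=
    le_of_pow_le_pow_left₀ two_ne_zero hε.le (by linarith)
  have hms : ε ≤ m * s := by
    have h2' : ε ^ 2 ≤ (m * s) ^ 2 := by rw [mul_pow, hm2]; linarith
    exact le_of_pow_le_pow_left₀ two_ne_zero (mul_nonneg hm0.le hs0) h2'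
  have hms' : ε ≤ m * s' := by
    have h2' : ε ^ 2 ≤ (m * s') ^ 2 := by rw [mul_pow, hm2]; linarith
    exact le_of_pow_le_pow_left₀ two_ne_zero (mul_nonneg hm0.le hs'0) h2'
  -- inner products with the weight vectors x, x'
  set a := ∑ i, (x i + y i + r) * x i with hadef
  set b := ∑ i, (x' i + y' i + r') * x' i with hbdef
  have ha : n + r * s ≤ a := by
    have heq : a = n + (∑ i, y i * x i) + r * s := by
      rw [hadef, hndef, hsdef, Finset.mul_sum, ← Finset.sum_add_distrib,
        ← Finset.sum_add_distrib]
      exact Finset.sum_congr rfl fun i _ => by ring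
    have hyx : 0 ≤ ∑ i, y i * x i :=
      Finset.sum_nonneg fun i _ => mul_nonneg (hy i) (hx i)
    rw [heq]; linarith
  have hb : n' + r' * s' ≤ b := by
    have heq : b = n' + (∑ i, y' i * x' i) + r' * s' := by
      rw [hbdef, hn'def, hs'def, Finset.mul_sum, ← Finset.sum_add_distrib,
        ← Finset.sum_add_distrib]
      exact Finset.sum_congr rfl fun i _ => by ring
    have hyx : 0 ≤ ∑ i, y' i * x' i :=
      Finset.sum_nonneg fun i _ => mul_nonneg (hy' i) (hx' i)
    rw [heq]; linarith
  -- Cauchy–Schwarz per side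
  have hCS : a ^ 2 ≤ A * n := Finset.sum_mul_sq_le_sq_mul_sq _ _ _
  have hCS' : b ^ 2 ≤ A' * n' := Finset.sum_mul_sq_le_sq_mul_sq _ _ _
  -- the combined quantity C = ε²(s+s') - ε m s s'
  set C : ℝ := ε ^ 2 * (s + s') - ε * m * (s * s') with hCdef
  have hC0 : 0 ≤ C := by
    have t1 : 0 ≤ ε * s * (ε - s') := mul_nonneg (mul_nonneg hε.le hs0) (by linarith)
    have t2 : 0 ≤ ε * s' * (ε - s) := mul_nonneg (mul_nonneg hε.le hs'0) (by linarith)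
    have t3 : 0 ≤ ε * s * s' * (2 - m) :=
      mul_nonneg (mul_nonneg (mul_nonneg hε.le hs0) hs'0) (by linarith)
    have hCsum : C = ε * s * (ε - s') + ε * s' * (ε - s) + ε * s * s' * (2 - m) := by
      rw [hCdef]; ring
    linarith [hCsum ▸ (by linarith [t1, t2, t3] :
      (0:ℝ) ≤ ε * s * (ε - s') + ε * s' * (ε - s) + ε * s * s' * (2 - m))]
  have hsum_eq : (n + r * s) * s' + (n' + r' * s') * s = C := by
    rw [hCdef]
    linear_combination s' * hn_eq + s * hn'_eq + (s * s') * hrr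
  have hCle : C ≤ a * s' + b * s := by
    rw [← hsum_eq]
    exact add_le_add (mul_le_mul_of_nonneg_right ha hs'0) (mul_le_mul_of_nonneg_right hb hs0)
  -- key scalar inequality : C² ≥ ε²(n s'² + n' s²)
  have hfac : C ^ 2 - ε ^ 2 * (n * s' ^ 2 + n' * s ^ 2)
      = 2 * ε ^ 2 * (s * s') * ((m * s - ε) * (m * s' - ε)) := by
    rw [hCdef]
    linear_combination (-(ε ^ 2 * s' ^ 2)) * hn_eq + (-(ε ^ 2 * s ^ 2)) * hn'_eq
      + (-(ε ^ 2 * s ^ 2 * s' ^ 2)) * hm2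
  have hprod : 0 ≤ 2 * ε ^ 2 * (s * s') * ((m * s - ε) * (m * s' - ε)) := by
    refine mul_nonneg (mul_nonneg (mul_nonneg (by norm_num) (sq_nonneg ε))
      (mul_nonneg hs0 hs'0)) (mul_nonneg ?_ ?_) <;> linarith
  have hkey : ε ^ 2 * (n * s' ^ 2 + n' * s ^ 2) ≤ C ^ 2 := by linarith
  -- two-term Cauchy–Schwarz (cleared denominators)
  have hCS2 : (a * s' + b * s) ^ 2 * (n * n')
      ≤ (a ^ 2 * n' + b ^ 2 * n) * (n * s' ^ 2 + n' * s ^ 2) := by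
    have hid : (a ^ 2 * n' + b ^ 2 * n) * (n * s' ^ 2 + n' * s ^ 2)
        - (a * s' + b * s) ^ 2 * (n * n') = (a * n' * s - b * n * s') ^ 2 := by ring
    linarith [sq_nonneg (a * n' * s - b * n * s'), hid]
  -- combine everything
  have hP : 0 < n * s' ^ 2 + n' * s ^ 2 :=
    add_pos (mul_pos hn_pos (pow_pos hs'_pos 2)) (mul_pos hn'_pos (pow_pos hs_pos 2))
  have hN : 0 < n * n' := mul_pos hn_pos hn'_pos
  have hsum : a ^ 2 * n' + b ^ 2 * n ≤ (A + A') * (n * n') := by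
    calc a ^ 2 * n' + b ^ 2 * n
        ≤ A * n * n' + A' * n' * n :=
          add_le_add (mul_le_mul_of_nonneg_right hCS hn'0)
            (mul_le_mul_of_nonneg_right hCS' hn0)
      _ = (A + A') * (n * n') := by ring
  have hC2 : C ^ 2 ≤ (a * s' + b * s) ^ 2 := pow_le_pow_left₀ hC0 hCle 2
  have step1 : ε ^ 2 * (n * s' ^ 2 + n' * s ^ 2) * (n * n') ≤ C ^ 2 * (n * n') :=
    mul_le_mul_of_nonneg_right hkey hN.le
  have step2 : C ^ 2 * (n * n') ≤ (a * s' + b * s) ^ 2 * (n * n') :=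
    mul_le_mul_of_nonneg_right hC2 hN.le
  have step4 : (a ^ 2 * n' + b ^ 2 * n) * (n * s' ^ 2 + n' * s ^ 2)
      ≤ (A + A') * (n * n') * (n * s' ^ 2 + n' * s ^ 2) :=
    mul_le_mul_of_nonneg_right hsum hP.le
  have hchain : ε ^ 2 * (n * s' ^ 2 + n' * s ^ 2) * (n * n')
      ≤ (A + A') * (n * n') * (n * s' ^ 2 + n' * s ^ 2) := by
    linarith [step1, step2, hCS2, step4]
  have hpos : 0 < (n * s' ^ 2 + n' * s ^ 2) * (n * n') := mul_pos hP hN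
  refine (mul_le_mul_iff_left₀ hpos).mp ?_
  calc ε ^ 2 * ((n * s' ^ 2 + n' * s ^ 2) * (n * n'))
      = ε ^ 2 * (n * s' ^ 2 + n' * s ^ 2) * (n * n') := by ring
    _ ≤ (A + A') * (n * n') * (n * s' ^ 2 + n' * s ^ 2) := hchain
    _ = (A + A') * ((n * s' ^ 2 + n' * s ^ 2) * (n * n')) := by ring
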